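/- For every curve φ in the admissible class U, the function 𝓕(φ) belongs to Y; that is, 𝓕(φ) is continuous on [0,1], satisfies 𝓕(φ)(0) = 𝓕(φ)(1) = 0, and is differentiable at α = 0, s̄ and 1 (one-sided at 0 and 1). -/

import Mathlib

noncomputable section

open Set
open scoped RealInnerProductSpace Topology

variable {H : Type*} [NormedAddCommGroup H] [InnerProductSpace ℝ H] [CompleteSpace H]

/-- Orthogonal projection of `y` onto the span of `v` (`P_v y`). -/
def Pproj (v y : H) : H := ⟪y, ‖v‖⁻¹ • v⟫ • (‖v‖⁻¹ • v)

/-- Projection of `y` onto the orthogonal complement of `v` (`P_v^⊥ y`). -/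
def Pperp (v y : H) : H := y - Pproj v y

/-- `f` is `C¹` on `[a,b]` with derivative `f'`. -/
def C1On {F : Type*} [NormedAddCommGroup F] [NormedSpace ℝ F] (a b : ℝ) (f f' : ℝ → F) : Prop :=
  (∀ α ∈ Icc a b, HasDerivWithinAt f (f' α) (Icc a b) α) ∧ ContinuousOn f' (Icc a b)

/-- `f` is `C²` on `[a,b]`. -/
def C2On {F : Type*} [NormedAddCommGroup F] [NormedSpace ℝ F] (a b : ℝ) (f f' f'' : ℝ → F) : Prop :=
  C1On a b f f' ∧ C1On a b f' f''

/-- The length `L(φ)` of a curve with derivative `φ'`. -/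
def len {F : Type*} [NormedAddCommGroup F] (φ' : ℝ → F) : ℝ := ∫ s in (0:ℝ)..1, ‖φ' s‖

/-- `Γ(φ)(α) = ∫₀^α |φ'| − α L(φ)`. -/
def Gam {F : Type*} [NormedAddCommGroup F] (φ' : ℝ → F) (α : ℝ) : ℝ :=
  (∫ s in (0:ℝ)..α, ‖φ' s‖) - α * len φ'

/-- The admissible class `U` of regular curves joining `yA` to `yB`. -/
def InU (yA yB : H) (φ φ' : ℝ → H) : Prop :=
  C1On 0 1 φ φ' ∧ φ 0 = yA ∧ φ 1 = yB ∧ ∀ α ∈ Icc (0:ℝ) 1, φ' α ≠ 0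

/-- The MEP equations. -/
def SolvesMEP (E : H → ℝ) (φ φ' : ℝ → H) : Prop :=
  (∀ α ∈ Icc (0:ℝ) 1, Pperp (φ' α) (gradient E (φ α)) = 0) ∧
  (∀ α ∈ Icc (0:ℝ) 1, Gam φ' α = 0)

/-- Strong local minimizer. -/
def IsStrongMin (E : H → ℝ) (hess : H → H →L[ℝ] H) (y : H) : Prop :=
  gradient E y = 0 ∧ ∃ c > 0, ∀ u : H, c * ‖u‖ ^ 2 ≤ ⟪hess y u, u⟫

/-- Index-1 saddle point. -/
def IsIndex1Saddle (E : H → ℝ) (hess : H → H →L[ℝ] H) (y : H) : Prop :=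
  gradient E y = 0 ∧
    ∃ v₁ : H, v₁ ≠ 0 ∧ (∃ l < (0:ℝ), hess y v₁ = l • v₁) ∧
      ∃ c > 0, ∀ u : H, ⟪u, v₁⟫ = 0 → c * ‖u‖ ^ 2 ≤ ⟪hess y u, u⟫

/-- Assumption (A). -/
def AssumpA (E : H → ℝ) (hess : H → H →L[ℝ] H) (yA yB : H)
    (φb φb' φb'' : ℝ → H) (sbar : ℝ) : Prop :=
  C2On 0 1 φb φb' φb'' ∧ InU yA yB φb φb' ∧ SolvesMEP E φb φb' ∧
  sbar ∈ Ioo (0:ℝ) 1 ∧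
  IsStrongMin E hess yA ∧ IsStrongMin E hess yB ∧
  IsIndex1Saddle E hess (φb sbar) ∧
  ∀ α ∈ Icc (0:ℝ) 1, gradient E (φb α) = 0 → α = 0 ∨ α = sbar ∨ α = 1

/-- `λ̄(α) = L(φ̄)⁻² (∇E(φ̄(α)), φ̄'(α))`. -/
def lamBar (E : H → ℝ) (φ φ' : ℝ → H) (α : ℝ) : ℝ :=
  ((len φ') ^ 2)⁻¹ * ⟪gradient E (φ α), φ' α⟫

/-- The MEP operator `𝓕`. -/
def Fop (E : H → ℝ) (sbar σA σB : ℝ) (φ φ' : ℝ → H) (α : ℝ) : H :=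
  Pperp (φ' α) (gradient E (φ α))
    - ((‖φ' α‖ - len φ') / len φ') • Pproj (φ' α) (gradient E (φ α))
    + (α * (α - 1) * ‖φ' α‖ / (sbar * (sbar - 1) * len φ')) •
        Pproj (φ' α) (gradient E (φ sbar))
    + ((σA + σB) * (Gam φ' α - α * (α - 1) / (sbar * (sbar - 1)) * Gam φ' sbar)) •
        (‖φ' α‖⁻¹ • φ' α)

/-- Membership in the image space `Y`. -/
def MemY {F : Type*} [NormedAddCommGroup F] [NormedSpace ℝ F] (sbar : ℝ) (f : ℝ → F) : Prop :=
  ContinuousOn f (Icc (0:ℝ) 1) ∧ f 0 = 0 ∧ f 1 = 0 ∧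
  DifferentiableWithinAt ℝ f (Icc (0:ℝ) 1) 0 ∧
  DifferentiableWithinAt ℝ f (Icc (0:ℝ) 1) sbar ∧
  DifferentiableWithinAt ℝ f (Icc (0:ℝ) 1) 1

/-- Membership in the space `X`. -/
def MemX {F : Type*} [NormedAddCommGroup F] [NormedSpace ℝ F] (ψ ψ' : ℝ → F) : Prop :=
  C1On 0 1 ψ ψ' ∧ ψ 0 = 0 ∧ ψ 1 = 0

/-- The `C¹` (and `X`) norm. -/
def normC1 {F : Type*} [NormedAddCommGroup F] (ψ ψ' : ℝ → F) : ℝ :=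
  (⨆ α : Icc (0:ℝ) 1, ‖ψ (α : ℝ)‖) + ⨆ α : Icc (0:ℝ) 1, ‖ψ' (α : ℝ)‖

/-- The weighted norm on `Y`. -/
def normY {F : Type*} [NormedAddCommGroup F] (sbar : ℝ) (f : ℝ → F) : ℝ :=
  (⨆ α : Ioo (0:ℝ) 1, ‖f (α : ℝ)‖ / |(α : ℝ) * ((α : ℝ) - 1)|) +
    ⨆ α : ↥(Icc (0:ℝ) 1 \ {sbar}), ‖f (α : ℝ) - f sbar‖ / |(α : ℝ) - sbar|

/-- `∫₀¹ (φ̄'(s), ψ'(s))/|φ̄'(s)| ds`. -/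
def gInt (φb' ψ' : ℝ → H) : ℝ := ∫ s in (0:ℝ)..1, ⟪φb' s, ψ' s⟫ / ‖φb' s‖

/-- `g_ψ(α)` (the linearisation `δΓ(φ̄)ψ`). -/
def gFun (φb' ψ' : ℝ → H) (α : ℝ) : ℝ :=
  (∫ s in (0:ℝ)..α, ⟪φb' s, ψ' s⟫ / ‖φb' s‖) - α * gInt φb' ψ'

/-- `g_ψ'(α)`. -/
def gFun' (φb' ψ' : ℝ → H) (α : ℝ) : ℝ := ⟪φb' α, ψ' α⟫ / ‖φb' α‖ - gInt φb' ψ'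

/-- The linearised MEP operator `T = δ𝓕(φ̄)`. -/
def Tlin (E : H → ℝ) (hess : H → H →L[ℝ] H) (φb φb' : ℝ → H)
    (sbar σA σB : ℝ) (ψ ψ' : ℝ → H) (α : ℝ) : H :=
  Pperp (φb' α) (hess (φb α) (ψ α) - lamBar E φb φb' α • ψ' α)
    + (α * (α - 1) / (sbar * (sbar - 1))) • Pproj (φb' α) (hess (φb sbar) (ψ sbar))
    + ((σA + σB) * (gFun φb' ψ' α - α * (α - 1) / (sbar * (sbar - 1)) * gFun φb' ψ' sbar)
        - lamBar E φb φb' α * gFun' φb' ψ' α) • (‖φb' α‖⁻¹ • φb' α)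

/-- Assumption (B). -/
def AssumpB (hess : H → H →L[ℝ] H) (yA yB vA vB : H) (σA σB : ℝ) : Prop :=
  hess yA vA = σA • vA ∧ hess yB vB = σB • vB ∧
  (∀ μ ∈ spectrum ℝ (hess yA), σA ≤ μ) ∧
  (∀ μ ∈ spectrum ℝ (hess yB), σB ≤ μ) ∧
  (∃ ε > 0, ∀ μ ∈ spectrum ℝ (hess yA), μ ≠ σA → σA + ε ≤ μ) ∧
  (∃ ε > 0, ∀ μ ∈ spectrum ℝ (hess yB), μ ≠ σB → σB + ε ≤ μ) ∧
  (∀ u : H, hess yA u = σA • u → ∃ c : ℝ, u = c • vA) ∧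
  (∀ u : H, hess yB u = σB • u → ∃ c : ℝ, u = c • vB)

/-- `P_v` as a continuous linear map. -/
def projL (v : H) : H →L[ℝ] H := (innerSL ℝ (‖v‖⁻¹ • v)).smulRight (‖v‖⁻¹ • v)

/-- `P_v^⊥` as a continuous linear map. -/
def projPerpL (v : H) : H →L[ℝ] H := ContinuousLinearMap.id ℝ H - projL v

/-- `B(α) = P⊥ ∇²E(φ̄(α)) P⊥`. -/
def Bop (hess : H → H →L[ℝ] H) (φb φb' : ℝ → H) (α : ℝ) : H →L[ℝ] H :=
  (projPerpL (φb' α)).comp ((hess (φb α)).comp (projPerpL (φb' α)))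

/-- `D(α) y = −(y,t'(α))t(α) − (y,t(α))t'(α)`. -/
def Dop (t t' : ℝ → H) (α : ℝ) : H →L[ℝ] H :=
  -((innerSL ℝ (t' α)).smulRight (t α)) - (innerSL ℝ (t α)).smulRight (t' α)

/-- The operator `A(α)`. -/
def Aop {K : Type*} [NormedAddCommGroup K] [InnerProductSpace ℝ K] [CompleteSpace K]
    (E : H → ℝ) (hess : H → H →L[ℝ] H) (φb φb' t' : ℝ → H)
    (Q Q' : ℝ → K →L[ℝ] H) (α : ℝ) : K →L[ℝ] K :=
  (ContinuousLinearMap.adjoint (Q α)).comp ((Bop hess φb φb' α).comp (Q α))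
    - lamBar E φb φb' α •
        ((ContinuousLinearMap.adjoint (Q α)).comp
            ((Dop (fun s => ‖φb' s‖⁻¹ • φb' s) t' α).comp (Q α))
          - (ContinuousLinearMap.adjoint (Q α)).comp (Q' α))

/-- `ω_S`. -/
def omegaS (hess : H → H →L[ℝ] H) (yS : H) : ℝ :=
  sInf {l : ℝ | l ∈ spectrum ℝ (hess yS) ∧ 0 < l}

/-- `ω_B`. -/
def omegaB (hess : H → H →L[ℝ] H) (yB : H) (σB : ℝ) : ℝ :=
  sInf {l : ℝ | l ∈ spectrum ℝ (hess yB) ∧ l ≠ σB}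

/-- The tube `𝒰_ε` around the path. -/
def Utube (φb : ℝ → H) (ε : ℝ) : Set H := {y : H | ∃ α ∈ Icc (0:ℝ) 1, ‖y - φb α‖ ≤ ε}

/-- Restriction of a second derivative to a subspace. -/
def restrict2 (K : Submodule ℝ H) (T : H →L[ℝ] H →L[ℝ] ℝ) : K →L[ℝ] K →L[ℝ] ℝ :=
  (((ContinuousLinearMap.compL ℝ K H ℝ).flip K.subtypeL)).comp (T.comp K.subtypeL)

/-- `C⁰` distance between `E'` (on the subspace `K`) and `E`, over `S`. -/
def subC0dist (K : Submodule ℝ H) (E : H → ℝ) (E' : K → ℝ) (S : Set K) : ℝ :=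
  ⨆ y : S, |E' y.1 - E (y.1 : H)|

/-- `C¹` distance between `E'` (on the subspace `K`) and `E`, over `S`. -/
def subC1dist (K : Submodule ℝ H) (E : H → ℝ) (E' : K → ℝ) (S : Set K) : ℝ :=
  subC0dist K E E' S +
    ⨆ y : S, ‖fderiv ℝ E' y.1 - (fderiv ℝ E (y.1 : H)).comp K.subtypeL‖

/-- `C²` distance between `E'` (on the subspace `K`) and `E`, over `S`. -/
def subC2dist (K : Submodule ℝ H) (E : H → ℝ) (E' : K → ℝ) (S : Set K) : ℝ :=
  subC1dist K E E' S +
    ⨆ y : S, @norm (K →L[ℝ] K →L[ℝ] ℝ)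
        (ContinuousLinearMap.hasOpNorm (𝕜 := ℝ) (𝕜₂ := ℝ) (E := K) (F := K →L[ℝ] ℝ))
        (fderiv ℝ (fun z => fderiv ℝ E' z) y.1
        - restrict2 K (fderiv ℝ (fun z => fderiv ℝ E z) (y.1 : H)))

lemma key_bilin {F G K : Type*} [NormedAddCommGroup F] [NormedSpace ℝ F]
    [NormedAddCommGroup G] [NormedSpace ℝ G] [NormedAddCommGroup K] [NormedSpace ℝ K]
    (B : F →L[ℝ] G →L[ℝ] K) {f : ℝ → F} {v : ℝ → G} {f' : F} {s : Set ℝ} {a : ℝ}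
    (hf : HasDerivWithinAt f f' s a) (hf0 : f a = 0) (hv : ContinuousWithinAt v s a) :
    HasDerivWithinAt (fun α => B (f α) (v α)) (B f' (v a)) s a := by
  have hO : f =O[𝓝[s] a] fun α => α - a := by
    simpa [hf0, Function.comp_def] using hf.isBigO_sub
  have ho : (fun α => v α - v a) =o[𝓝[s] a] (fun _ => (1:ℝ)) := by
    rw [Asymptotics.isLittleO_one_iff]
    simpa using hv.tendsto.sub_const (v a)
  have h1 : (fun α => B (f α) (v α - v a)) =o[𝓝[s] a] fun α => α - a := by
    calc (fun α => B (f α) (v α - v a))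
        =O[𝓝[s] a] fun α => ‖f α‖ * ‖v α - v a‖ := by
          apply Asymptotics.IsBigO.of_bound ‖B‖
          filter_upwards with α
          simpa [abs_of_nonneg, norm_mul, mul_assoc] using B.le_opNorm₂ (f α) (v α - v a)
      _ =o[𝓝[s] a] fun α => α - a := by
          simpa using hO.norm_left.mul_isLittleO ho.norm_left
  have h2 : HasDerivWithinAt (fun α => B (f α) (v α - v a)) 0 s a := by
    rw [hasDerivWithinAt_iff_isLittleO]
    simpa [hf0] using h1
  have h3 : HasDerivWithinAt (fun α => B (f α) (v a)) (B f' (v a)) s a := by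
    have := (B.flip (v a)).hasFDerivAt.comp_hasDerivWithinAt a hf
    simpa [Function.comp_def] using this
  have := h2.add h3
  simp only [zero_add] at this
  refine this.congr (fun α _ => ?_) ?_ <;> simp [map_sub]


theorem stmt0
    (E : H → ℝ) (hE : ContDiff ℝ 3 E)
    (hess : H → H →L[ℝ] H) (hhess : ∀ y : H, HasFDerivAt (gradient E) (hess y) y)
    (yA yB : H) (φb φb' φb'' : ℝ → H) (sbar : ℝ)
    (hA : AssumpA E hess yA yB φb φb' φb'' sbar)
    (σA σB : ℝ)
    (hσA : HasDerivWithinAt (lamBar E φb φb') σA (Icc (0:ℝ) 1) 0)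
    (hσB : HasDerivWithinAt (lamBar E φb φb') σB (Icc (0:ℝ) 1) 1)
    (φ φ' : ℝ → H) (hφ : InU yA yB φ φ') :
    MemY sbar (Fop E sbar σA σB φ φ') := by
  obtain ⟨-, -, -, hsb, hmA, hmB, -, -⟩ := hA
  have hgradA : gradient E yA = 0 := hmA.1
  have hgradB : gradient E yB = 0 := hmB.1
  obtain ⟨⟨hder, hcont⟩, h0, h1, hne⟩ := hφ
  set S := Icc (0:ℝ) 1 with hS
  have hs0 : sbar ≠ 0 := ne_of_gt hsb.1
  have hs1 : sbar - 1 ≠ 0 := sub_ne_zero.mpr (ne_of_lt hsb.2)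
  have hK : sbar * (sbar - 1) ≠ 0 := mul_ne_zero hs0 hs1
  have hsS : sbar ∈ S := ⟨le_of_lt hsb.1, le_of_lt hsb.2⟩
  have h0S : (0:ℝ) ∈ S := ⟨le_rfl, zero_le_one⟩
  have h1S : (1:ℝ) ∈ S := ⟨zero_le_one, le_rfl⟩
  have hgc : Continuous (gradient E) := by
    rw [continuous_iff_continuousAt]
    exact fun y => (hhess y).differentiableAt.continuousAt
  have hφc : ContinuousOn φ S := fun α hα => (hder α hα).continuousWithinAt
  have hGd : ∀ α ∈ S, HasDerivWithinAt (fun s => gradient E (φ s)) (hess (φ α) (φ' α)) S α :=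
    fun α hα => (hhess (φ α)).comp_hasDerivWithinAt α (hder α hα)
  have hGc : ContinuousOn (fun s => gradient E (φ s)) S := hgc.comp_continuousOn hφc
  have hnne : ∀ α ∈ S, ‖φ' α‖ ≠ 0 := fun α hα => norm_ne_zero_iff.mpr (hne α hα)
  have htc : ContinuousOn (fun α => ‖φ' α‖⁻¹ • φ' α) S :=
    ((hcont.norm).inv₀ hnne).smul hcont
  have hInt : ∀ α ∈ S, IntervalIntegrable (fun s => ‖φ' s‖) MeasureTheory.volume 0 α :=
    fun α hα => (hcont.norm.mono (by rw [uIcc_of_le hα.1]; exact Icc_subset_Icc le_rfl hα.2)).intervalIntegrable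
  have hL : 0 < len φ' := by
    refine intervalIntegral.intervalIntegral_pos_of_pos_on (hInt 1 h1S) ?_ one_pos
    intro x hx
    exact norm_pos_iff.mpr (hne x ⟨le_of_lt hx.1, le_of_lt hx.2⟩)
  have hLne : len φ' ≠ 0 := ne_of_gt hL
  have hGamd : ∀ α ∈ S, HasDerivWithinAt (Gam φ') (‖φ' α‖ - len φ') S α := by
    intro α hα
    haveI : Fact (α ∈ Icc (0:ℝ) 1) := ⟨hα⟩
    have hFTC : HasDerivWithinAt (fun u => ∫ s in (0:ℝ)..u, ‖φ' s‖) ‖φ' α‖ S α :=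
      intervalIntegral.integral_hasDerivWithinAt_right (hInt α hα)
        (hcont.norm.stronglyMeasurableAtFilter_nhdsWithin measurableSet_Icc α)
        (hcont.norm.continuousWithinAt hα)
    have h := hFTC.sub ((hasDerivWithinAt_id α S).mul_const (len φ'))
    rw [one_mul] at h
    exact h
  have hGamc : ContinuousOn (Gam φ') S := fun α hα => (hGamd α hα).continuousWithinAt
  have hGam0 : Gam φ' 0 = 0 := by simp [Gam]
  have hGam1 : Gam φ' 1 = 0 := by simp [Gam, len]
  set Gs := gradient E (φ sbar) with hGs
  set w : ℝ → ℝ := fun α => α * (α - 1) / (sbar * (sbar - 1)) with hw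
  set c : ℝ → ℝ := fun α => (len φ')⁻¹ * ⟪w α • Gs - gradient E (φ α), φ' α⟫
      + (σA + σB) * (Gam φ' α - w α * Gam φ' sbar) with hc
  have hwc : Continuous w := by fun_prop
  have hwd : ∀ a : ℝ, HasDerivWithinAt w ((1 * (a - 1) + a * 1) / (sbar * (sbar - 1))) S a :=
    fun a => ((hasDerivWithinAt_id a S).mul ((hasDerivWithinAt_id a S).sub_const 1)).div_const _
  -- key pointwise identity
  have hkey : ∀ α ∈ S, Fop E sbar σA σB φ φ' α
      = gradient E (φ α) + c α • (‖φ' α‖⁻¹ • φ' α) := by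
    intro α hα
    have hn := hnne α hα
    simp only [Fop, Pperp, Pproj, hc, hw, hGs, real_inner_smul_right, inner_sub_left,
      real_inner_smul_left, smul_smul]
    match_scalars
    · ring
    · field_simp
      ring
  have hcc : ContinuousOn c S := by
    apply ContinuousOn.add
    · exact continuousOn_const.mul
        (((hwc.continuousOn.smul continuousOn_const).sub hGc).inner hcont)
    · exact continuousOn_const.mul (hGamc.sub (hwc.continuousOn.mul continuousOn_const))
  have hFc : ContinuousOn (Fop E sbar σA σB φ φ') S :=
    (hGc.add (hcc.smul htc)).congr hkey
  -- differentiability at a point where the cancellations occur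
  have main : ∀ a ∈ S, (w a • Gs - gradient E (φ a)) = 0 → c a = 0 →
      DifferentiableWithinAt ℝ (Fop E sbar σA σB φ φ') S a := by
    intro a ha hh hca
    have hhd : HasDerivWithinAt (fun α => w α • Gs - gradient E (φ α))
        (((1 * (a - 1) + a * 1) / (sbar * (sbar - 1))) • Gs - hess (φ a) (φ' a)) S a :=
      ((hwd a).smul_const Gs).sub (hGd a ha)
    have hinner : HasDerivWithinAt (fun α => ⟪w α • Gs - gradient E (φ α), φ' α⟫)
        (⟪((1 * (a - 1) + a * 1) / (sbar * (sbar - 1))) • Gs - hess (φ a) (φ' a), φ' a⟫) S a := by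
      have := key_bilin (innerSL ℝ) hhd hh (hcont.continuousWithinAt ha)
      exact this
    have hcd : HasDerivWithinAt c
        ((len φ')⁻¹ * ⟪((1 * (a - 1) + a * 1) / (sbar * (sbar - 1))) • Gs
            - hess (φ a) (φ' a), φ' a⟫
          + (σA + σB) * ((‖φ' a‖ - len φ')
            - (1 * (a - 1) + a * 1) / (sbar * (sbar - 1)) * Gam φ' sbar)) S a :=
      (hinner.const_mul _).add (((hGamd a ha).sub ((hwd a).mul_const _)).const_mul _)
    have hsmul := key_bilin (ContinuousLinearMap.lsmul ℝ ℝ) hcd hca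
      (htc.continuousWithinAt ha)
    simp only [ContinuousLinearMap.lsmul_apply] at hsmul
    have hsum := (hGd a ha).add hsmul
    exact (hsum.congr (fun α hα => hkey α hα) (hkey a ha)).differentiableWithinAt
  refine ⟨hFc, ?_, ?_, ?_, ?_, ?_⟩
  · simp [Fop, Pperp, Pproj, hGam0, h0, hgradA]
  · simp [Fop, Pperp, Pproj, hGam1, h1, hgradB]
  · refine main 0 h0S (by simp [hw, h0, hgradA]) (by simp [hc, hw, hGam0, h0, hgradA])
  · refine main sbar hsS (by simp [hw, div_self hK, hGs]) (by simp [hc, hw, div_self hK, hGs])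
  · refine main 1 h1S (by simp [hw, h1, hgradB]) (by simp [hc, hw, hGam1, h1, hgradB])
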